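/- Failure of contraction for the primal Bellman operator: specialize the main model to a deterministic shock (Z = {z} a singleton), τ = 0, and liquidation value L(k) = 2ν√k, and define the primal operator S on bounded functions v of (b,k) by (Sv)(z,b,k) = sup{ d + β·v(z,b',k') } over b'∈[b̲,b̄], d≥0, i≥0 with zAk^α + q_v(b',k')·b' − b = d + i and k' = (1−δ)k + i, where q_v(b',k') = 1/(1+ρ) if b'≤0 and q_v(b',k') = ( b'·1{v(z,b',k')>0} + 2ν√k'·1{v(z,b',k')=0} )/( b'(1+ρ) ) if b'>0, and (Sv)(z,b,k) = 0 if the constraint set is empty. Then there exist parameters ν>0, ε>0, b̄>0 and a state (z,b,k) with (1−δ)k ≤ (ν/(1+ρ))² and zAk^α + (1−δ)k − b + (ν/(1+ρ))² > 0 such that, for the constant functions v₁ ≡ 0 and v₂ ≡ ε, one has (Sv₁)(z,b,k) = zAk^α + (1−δ)k − b + (ν/(1+ρ))², (Sv₂)(z,b,k) = zAk^α + (1−δ)k − b + βε + b̄/(1+ρ) − (1−δ)k, and (Sv₂)(z,b,k) − (Sv₁)(z,b,k) > ε = ‖v₂ − v₁‖_∞. Hence S is not a contraction in the uniform norm. 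-/

import Mathlib

open Set

/-- Break-even bond price in the specialized model (deterministic shock, `τ = 0`,
liquidation value `L(k) = 2ν√k`) induced by a candidate value function `v` of
`(b, k)`: `q_v(b',k') = 1/(1+ρ)` if `b' ≤ 0`, and
`q_v(b',k') = (b'·1{v(b',k')>0} + 2ν√k'·1{v(b',k')=0})/(b'(1+ρ))` if `b' > 0`. -/
noncomputable def primalPrice (ρ ν : ℝ) (v : ℝ → ℝ → ℝ) (b' k' : ℝ) : ℝ :=
  if b' ≤ 0 then 1 / (1 + ρ)
  else ((if 0 < v b' k' then b' else 0) +
      (if v b' k' = 0 then 2 * ν * Real.sqrt k' else 0)) / (b' * (1 + ρ))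

/-- The primal Bellman operator `S` of the specialized model (deterministic shock
`z`, `τ = 0`, `L(k) = 2ν√k`): `(Sv)(z,b,k)` is the supremum of `d + β v(b',k')`
over `b' ∈ [b̲,b̄]`, `d ≥ 0`, `i ≥ 0` with budget
`zAk^α + q_v(b',k')·b' - b = d + i` and `k' = (1-δ)k + i`.  (In `ℝ`, the
supremum of the empty set is `0`, matching the convention `Sv = 0` when the
constraint set is empty.) -/
noncomputable def primalOp (A α δ ρ β bLow bHigh ν z : ℝ)
    (v : ℝ → ℝ → ℝ) (b k : ℝ) : ℝ :=
  sSup {r | ∃ b' d i : ℝ, bLow ≤ b' ∧ b' ≤ bHigh ∧ 0 ≤ d ∧ 0 ≤ i ∧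
    z * A * k ^ α + primalPrice ρ ν v b' ((1 - δ) * k + i) * b' - b = d + i ∧
    r = d + β * v b' ((1 - δ) * k + i)}

/-- Helper: a real supremum equals a nonnegative upper bound that belongs to the set. -/
lemma sSup_eq_of_ub_mem (S : Set ℝ) (a : ℝ) (h0 : 0 ≤ a)
    (hub : ∀ r ∈ S, r ≤ a) (hmem : a ∈ S) : sSup S = a :=
  le_antisymm (Real.sSup_le hub h0) (le_csSup ⟨a, hub⟩ hmem)

/-- failure of contraction for the primal Bellman operator.  In the
specialized model there exist `ν > 0`, `ε > 0`, `b̄ > 0` and a state `(z,b,k)`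
with `(1-δ)k ≤ (ν/(1+ρ))²` and `zAk^α + (1-δ)k - b + (ν/(1+ρ))² > 0` such that,
for the constant functions `v₁ ≡ 0` and `v₂ ≡ ε`,
`(Sv₁)(z,b,k) = zAk^α + (1-δ)k - b + (ν/(1+ρ))²`,
`(Sv₂)(z,b,k) = zAk^α + (1-δ)k - b + βε + b̄/(1+ρ) - (1-δ)k`, and
`(Sv₂)(z,b,k) - (Sv₁)(z,b,k) > ε = ‖v₂ - v₁‖_∞`; hence `S` is not a contraction
in the uniform norm. -/
theorem primal_operator_not_contraction
    (A α δ ρ β bLow : ℝ) (hA : 0 < A) (hα : α ∈ Ioo (0 : ℝ) 1)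
    (hδ : δ ∈ Ioo (0 : ℝ) 1) (hρ : ρ ∈ Ioo (0 : ℝ) 1) (hβ : β ∈ Ioo (0 : ℝ) 1)
    (hbLow : bLow ≤ 0) :
    ∃ ν : ℝ, 0 < ν ∧ ∃ ε : ℝ, 0 < ε ∧ ∃ bHigh : ℝ, 0 < bHigh ∧
      ∃ z b k : ℝ,
        (1 - δ) * k ≤ (ν / (1 + ρ)) ^ 2 ∧
        0 < z * A * k ^ α + (1 - δ) * k - b + (ν / (1 + ρ)) ^ 2 ∧
        primalOp A α δ ρ β bLow bHigh ν z (fun _ _ => 0) b k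
          = z * A * k ^ α + (1 - δ) * k - b + (ν / (1 + ρ)) ^ 2 ∧
        primalOp A α δ ρ β bLow bHigh ν z (fun _ _ => ε) b k
          = z * A * k ^ α + (1 - δ) * k - b + β * ε + bHigh / (1 + ρ) - (1 - δ) * k ∧
        ε < primalOp A α δ ρ β bLow bHigh ν z (fun _ _ => ε) b k
            - primalOp A α δ ρ β bLow bHigh ν z (fun _ _ => 0) b k := by
  obtain ⟨hρ0, hρ1⟩ := hρ
  obtain ⟨hβ0, hβ1⟩ := hβ
  have h1ρ : (0:ℝ) < 1 + ρ := by linarith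
  set c : ℝ := 1 / (1 + ρ) with hc
  have hc0 : 0 < c := by positivity
  have hcρ : c * (1 + ρ) = 1 := by rw [hc]; field_simp
  have hc1 : c < 1 := by rw [hc, div_lt_one h1ρ]; linarith
  have hc2 : 1/2 < c := by rw [hc, lt_div_iff₀ h1ρ]; linarith
  have key1 : primalOp A α δ ρ β bLow 4 1 0 (fun _ _ => 0) 0 0 = c ^ 2 := by
    unfold primalOp
    refine sSup_eq_of_ub_mem _ _ (by positivity) ?_ ?_
    · rintro r ⟨b', d, i, hb1, hb4, hd, hi, hbud, hr⟩
      simp only [zero_mul, mul_zero, zero_add, sub_zero] at hbud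
      have hr' : r = d := by rw [hr]; norm_num
      subst hr'
      unfold primalPrice at hbud
      rcases le_or_gt b' 0 with hb0 | hb'
      · rw [if_pos hb0] at hbud
        have h1 : 1 / (1 + ρ) * b' ≤ 0 :=
          mul_nonpos_of_nonneg_of_nonpos (by positivity) hb0
        nlinarith [sq_nonneg c]
      · rw [if_neg (not_le.mpr hb'), if_neg (lt_irrefl (0 : ℝ)), if_pos rfl] at hbud
        have heq : (0 + 2 * 1 * Real.sqrt i) / (b' * (1 + ρ)) * b'
            = 2 * Real.sqrt i / (1 + ρ) := by
          field_simp
          ring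
        rw [heq] at hbud
        have key : 2 * Real.sqrt i = (r + i) * (1 + ρ) := by
          rw [← hbud]; field_simp
        nlinarith [sq_nonneg (Real.sqrt i * (1 + ρ) - 1), Real.sq_sqrt hi,
          sq_nonneg (Real.sqrt i), mul_pos h1ρ h1ρ, hcρ]
    · refine ⟨4, c ^ 2, c ^ 2, by linarith, le_refl 4, by positivity, by positivity, ?_, ?_⟩
      · have hk' : (1 - δ) * 0 + c ^ 2 = c ^ 2 := by ring
        rw [hk']
        unfold primalPrice
        rw [if_neg (by norm_num : ¬ (4:ℝ) ≤ 0)]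
        simp only [lt_self_iff_false, if_false, if_pos rfl]
        rw [Real.sqrt_sq hc0.le]
        rw [hc]
        field_simp
        simp only [↓reduceIte]
        field_simp
        ring
      · simp
  have key2 : primalOp A α δ ρ β bLow 4 1 0 (fun _ _ => (1:ℝ)) 0 0 = 4 * c + β := by
    unfold primalOp
    refine sSup_eq_of_ub_mem _ _ (by positivity) ?_ ?_
    · rintro r ⟨b', d, i, hb1, hb4, hd, hi, hbud, hr⟩
      simp only [zero_mul, mul_zero, zero_add, sub_zero] at hbud
      have hr' : r = d + β := by rw [hr]; norm_num
      subst hr'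
      unfold primalPrice at hbud
      rcases le_or_gt b' 0 with hb0 | hb'
      · rw [if_pos hb0] at hbud
        have h1 : 1 / (1 + ρ) * b' ≤ 0 :=
          mul_nonpos_of_nonneg_of_nonpos (by positivity) hb0
        nlinarith
      · rw [if_neg (not_le.mpr hb'), if_pos one_pos, if_neg one_ne_zero] at hbud
        have heq : (b' + 0) / (b' * (1 + ρ)) * b' = b' / (1 + ρ) := by
          field_simp
          ring
        rw [heq] at hbud
        have h4 : b' / (1 + ρ) ≤ 4 / (1 + ρ) := by gcongr
        have h4c : 4 / (1 + ρ) = 4 * c := by rw [hc]; ring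
        linarith
    · refine ⟨4, 4 * c, 0, by linarith, le_refl 4, by positivity, le_refl 0, ?_, ?_⟩
      · unfold primalPrice
        rw [if_neg (by norm_num : ¬ (4:ℝ) ≤ 0)]
        norm_num
        rw [hc]
        field_simp
      · norm_num
  refine ⟨1, one_pos, 1, one_pos, 4, by norm_num, 0, 0, 0, ?_, ?_, ?_, ?_, ?_⟩
  · rw [mul_zero]; positivity
  · have hz : (0:ℝ) * A * (0:ℝ) ^ α = 0 := by rw [zero_mul, zero_mul]
    rw [hz]
    have : (0:ℝ) < (1 / (1 + ρ)) ^ 2 := by positivity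
    linarith
  · rw [key1, hc]; ring
  · rw [key2, hc]; ring
  · rw [key1, key2]
    have hcc : c ^ 2 < c := by nlinarith
    linarith
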